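/- For every integer k ≥ 2, every word w of length n, and every j ≤ n, one has Γ_j^{(k)}(γ_j^{(k)}(w)) = Γ_j^{(k)}(w); consequently γ_j^{(k)} is an involution on words of length n, i.e. γ_j^{(k)}(γ_j^{(k)}(w)) = w. -/

import Mathlib

open scoped Classical

/-- `x` splits the pair `a`, `b` if `a ≤ x < b` or `b ≤ x < a`. -/
def Splits (x a b : ℕ) : Prop := (a ≤ x ∧ x < b) ∨ (b ≤ x ∧ x < a)

/-- `m ∈ Γ_j^{(k)}(w)`, where the word `w` is accessed with 1-based indices:
`j - k ∈ Γ_j^{(k)}(w)` when `w j` splits the pair `w (j-k), w (j-k+1)`, and for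
`i ∈ Γ_j^{(k)}(w)`, also `i - k ∈ Γ_j^{(k)}(w)` when exactly one of `w i`, `w (i+1)`
splits the pair `w (i-k), w (i-k+1)`. -/
def MemGamma (k : ℕ) (w : ℕ → ℕ) (j m : ℕ) : Prop :=
  1 ≤ m ∧ ∃ t : ℕ, m + (t + 1) * k = j ∧
    Splits (w j) (w (j - k)) (w (j - k + 1)) ∧
    ∀ s, 1 ≤ s → s ≤ t →
      Xor' (Splits (w (m + s * k)) (w (m + (s - 1) * k)) (w (m + (s - 1) * k + 1)))
           (Splits (w (m + s * k + 1)) (w (m + (s - 1) * k)) (w (m + (s - 1) * k + 1)))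

/-- The map `γ_j^{(k)}`: interchange `w i` and `w (i+1)` for every `i ∈ Γ_j^{(k)}(w)`. -/
noncomputable def gamW (k j : ℕ) (w : ℕ → ℕ) : ℕ → ℕ := fun p =>
  if MemGamma k w j p then w (p + 1)
  else if MemGamma k w j (p - 1) then w (p - 1)
  else w p

noncomputable def phiAux (k : ℕ) (w : ℕ → ℕ) : ℕ → ℕ → ℕ
  | 0 => w
  | j + 1 => gamW k (j + 1) (phiAux k w j)

/-- `φ^{(k)} = γ_n^{(k)} ∘ γ_{n-1}^{(k)} ∘ ⋯ ∘ γ_1^{(k)}` on words of length `n`. -/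
noncomputable def phiW (k n : ℕ) (w : ℕ → ℕ) : ℕ → ℕ := phiAux k w n

/-- 1-based access to the letters of a list word. -/
def wf (l : List ℕ) (i : ℕ) : ℕ := l.getD (i - 1) 0

/-- `φ^{(k)}` as an operation on list words. -/
noncomputable def phiL (k : ℕ) (l : List ℕ) : List ℕ :=
  List.ofFn (fun i : Fin l.length => phiW k l.length (wf l) (i.1 + 1))

/-- The `k`-descent set `Des_k(w) = {(i, i+k) : w i > w (i+k)}` of a word of length `n`,
recorded by its set of first components. -/
def DesKF (k n : ℕ) (w : ℕ → ℕ) : Finset ℕ :=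
  (Finset.Icc 1 n).filter fun i => i + k ≤ n ∧ w (i + k) < w i

/-- The `k`-inversion set `Inv_k(w) = {(i, j) : 0 < j - i < k and w i > w j}`. -/
def InvKF (k n : ℕ) (w : ℕ → ℕ) : Finset (ℕ × ℕ) :=
  ((Finset.Icc 1 n) ×ˢ (Finset.Icc 1 n)).filter fun p =>
    p.1 < p.2 ∧ p.2 - p.1 < k ∧ w p.2 < w p.1

/-- The `k`-major index `maj_k(w) = |Inv_k(w)| + Σ_{(i,i+k) ∈ Des_k(w)} i`. -/
def majKF (k n : ℕ) (w : ℕ → ℕ) : ℕ := (InvKF k n w).card + ∑ i ∈ DesKF k n w, i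

/-- The `k`-major index of a list word. -/
def majKL (k : ℕ) (l : List ℕ) : ℕ := majKF k l.length (wf l)

/-- The ordinary major index of a list word: the sum of the indices `i` with
`w i > w (i+1)`. -/
def majL (l : List ℕ) : ℕ :=
  ∑ i ∈ (Finset.Icc 1 l.length).filter (fun i => i + 1 ≤ l.length ∧ wf l (i + 1) < wf l i), i

/-- The ordinary inversion number of a list word: the number of pairs `i < j` with
`w i > w j`. -/
def invL (l : List ℕ) : ℕ :=
  (((Finset.Icc 1 l.length) ×ˢ (Finset.Icc 1 l.length)).filter fun p =>
    p.1 < p.2 ∧ wf l p.2 < wf l p.1).card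

/-- For `k ≥ 2`, a word `w` of length `n` and `j ≤ n`,
`Γ_j^{(k)}(γ_j^{(k)}(w)) = Γ_j^{(k)}(w)`; consequently `γ_j^{(k)}` is an involution:
`γ_j^{(k)}(γ_j^{(k)}(w)) = w`. -/
-- auxiliary lemmas

lemma gamW_apply (k j : ℕ) (w : ℕ → ℕ) (p : ℕ) :
    gamW k j w p = if MemGamma k w j p then w (p + 1)
      else if MemGamma k w j (p - 1) then w (p - 1) else w p := rfl

lemma mem_mod {k j m : ℕ} {w : ℕ → ℕ} (h : MemGamma k w j m) : m % k = j % k := by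
  obtain ⟨-, t, ht, -⟩ := h
  rw [← ht, Nat.add_mul_mod_self_right]

lemma not_mem_succ {k j m : ℕ} (w : ℕ → ℕ) (hk : 2 ≤ k) (hm : m % k = j % k) :
    ¬ MemGamma k w j (m + 1) := by
  intro h
  have h1 : m % k = (m + 1) % k := hm.trans (mem_mod h).symm
  have h2 : k ∣ (m + 1) - m := (Nat.modEq_iff_dvd' (Nat.le_succ m)).mp h1
  have h4 : (m + 1) - m = 1 := by omega
  rw [h4] at h2
  have := Nat.le_of_dvd (by omega) h2
  omega

lemma not_mem_pred {k j m : ℕ} (w : ℕ → ℕ) (hk : 2 ≤ k) (hm : m % k = j % k) :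
    ¬ MemGamma k w j (m - 1) := by
  intro h
  have h0 : 1 ≤ m - 1 := h.1
  have h1 : (m - 1) % k = m % k := (mem_mod h).trans hm.symm
  have h2 : k ∣ m - (m - 1) := (Nat.modEq_iff_dvd' (Nat.sub_le m 1)).mp h1
  have h4 : m - (m - 1) = 1 := by omega
  rw [h4] at h2
  have := Nat.le_of_dvd (by omega) h2
  omega

lemma not_mem_j {k j : ℕ} (w : ℕ → ℕ) (hk : 2 ≤ k) : ¬ MemGamma k w j j := by
  rintro ⟨-, t, ht, -⟩
  have h1 : (t + 1) * k = 0 := by omega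
  rcases Nat.mul_eq_zero.mp h1 with h | h <;> omega

lemma eval_mem {k j m : ℕ} (w : ℕ → ℕ) (hk : 2 ≤ k) (hm : m % k = j % k)
    (h : MemGamma k w j m) :
    gamW k j w m = w (m + 1) ∧ gamW k j w (m + 1) = w m := by
  constructor
  · rw [gamW_apply, if_pos h]
  · rw [gamW_apply, if_neg (not_mem_succ w hk hm), Nat.add_sub_cancel, if_pos h]

lemma eval_not_mem {k j m : ℕ} (w : ℕ → ℕ) (hk : 2 ≤ k) (hm : m % k = j % k)
    (h : ¬ MemGamma k w j m) :
    gamW k j w m = w m ∧ gamW k j w (m + 1) = w (m + 1) := by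
  constructor
  · rw [gamW_apply, if_neg h, if_neg (not_mem_pred w hk hm)]
  · rw [gamW_apply, if_neg (not_mem_succ w hk hm), Nat.add_sub_cancel, if_neg h]

lemma eval_j {k j : ℕ} (w : ℕ → ℕ) (hk : 2 ≤ k) : gamW k j w j = w j := by
  rw [gamW_apply, if_neg (not_mem_j w hk), if_neg (not_mem_pred w hk rfl)]

lemma splits_pair {k j m : ℕ} (w : ℕ → ℕ) (hk : 2 ≤ k) (hm : m % k = j % k) :
    ∀ x, Splits x (gamW k j w m) (gamW k j w (m + 1)) ↔ Splits x (w m) (w (m + 1)) := by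
  intro x
  by_cases h : MemGamma k w j m
  · rw [(eval_mem w hk hm h).1, (eval_mem w hk hm h).2]
    exact or_comm
  · rw [(eval_not_mem w hk hm h).1, (eval_not_mem w hk hm h).2]

lemma mem_iff {k j m t : ℕ} (hk : 2 ≤ k) (ht : m + (t + 1) * k = j) (w : ℕ → ℕ) :
    MemGamma k w j m ↔ 1 ≤ m ∧ Splits (w j) (w (j - k)) (w (j - k + 1)) ∧
      ∀ s, 1 ≤ s → s ≤ t →
        Xor' (Splits (w (m + s * k)) (w (m + (s - 1) * k)) (w (m + (s - 1) * k + 1)))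
             (Splits (w (m + s * k + 1)) (w (m + (s - 1) * k)) (w (m + (s - 1) * k + 1))) := by
  constructor
  · rintro ⟨h1, t', ht', hb, hx⟩
    have h3 : (t' + 1) * k = (t + 1) * k := Nat.add_left_cancel (ht'.trans ht.symm)
    have h4 : t' + 1 = t + 1 := Nat.eq_of_mul_eq_mul_right (by omega) h3
    have h5 : t' = t := by omega
    subst h5
    exact ⟨h1, hb, hx⟩
  · rintro ⟨h1, hb, hx⟩
    exact ⟨h1, t, ht, hb, hx⟩

lemma mem_chain {k j m t : ℕ} (hk : 2 ≤ k) (ht : m + (t + 1 + 1) * k = j) (w : ℕ → ℕ) :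
    MemGamma k w j m ↔ 1 ≤ m ∧ MemGamma k w j (m + k) ∧
      Xor' (Splits (w (m + k)) (w m) (w (m + 1)))
           (Splits (w (m + k + 1)) (w m) (w (m + 1))) := by
  have ht' : m + k + (t + 1) * k = j := by rw [← ht]; ring
  rw [mem_iff hk ht w, mem_iff hk ht' w]
  constructor
  · rintro ⟨h1, hb, hx⟩
    refine ⟨h1, ⟨by omega, hb, fun s hs1 hst => ?_⟩, ?_⟩
    · have hh := hx (s + 1) (by omega) (by omega)
      simp only [Nat.add_sub_cancel] at hh
      have e1 : m + k + s * k = m + (s + 1) * k := by ring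
      have e2 : m + k + (s - 1) * k = m + s * k := by
        obtain ⟨s', rfl⟩ : ∃ s', s = s' + 1 := ⟨s - 1, by omega⟩
        simp only [Nat.add_sub_cancel]
        ring
      rw [e1, e2]
      exact hh
    · have hh := hx 1 le_rfl (by omega)
      simpa using hh
  · rintro ⟨h1, ⟨h1', hb, hx⟩, hx1⟩
    refine ⟨h1, hb, fun s hs1 hst => ?_⟩
    rcases Nat.lt_or_ge s 2 with hs | hs
    · have hseq : s = 1 := by omega
      subst hseq
      simpa using hx1
    · have hh := hx (s - 1) (by omega) (by omega)
      have e1 : m + k + (s - 1) * k = m + s * k := by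
        obtain ⟨s', rfl⟩ : ∃ s', s = s' + 2 := ⟨s - 2, by omega⟩
        simp only [show s' + 2 - 1 = s' + 1 from rfl]
        ring
      have e2 : m + k + (s - 1 - 1) * k = m + (s - 1) * k := by
        obtain ⟨s', rfl⟩ : ∃ s', s = s' + 2 := ⟨s - 2, by omega⟩
        simp only [show s' + 2 - 1 = s' + 1 from rfl, Nat.add_sub_cancel]
        ring
      rw [e1, e2] at hh
      exact hh

lemma key {k j : ℕ} (hk : 2 ≤ k) (w : ℕ → ℕ) :
    ∀ t m, m + (t + 1) * k = j →
      (MemGamma k (gamW k j w) j m ↔ MemGamma k w j m) := by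
  intro t
  induction t with
  | zero =>
    intro m ht
    have hm : m % k = j % k := by rw [← ht, Nat.add_mul_mod_self_right]
    have ht2 : m + k = j := by simpa using ht
    have hjk : j - k = m := by omega
    rw [mem_iff hk ht (gamW k j w), mem_iff hk ht w, hjk, eval_j w hk,
      splits_pair w hk hm]
    constructor <;> rintro ⟨h1, hb, -⟩ <;>
      exact ⟨h1, hb, fun s hs1 hs0 => absurd (hs1.trans hs0) (by omega)⟩
  | succ t IH =>
    intro m ht
    have hm : m % k = j % k := by rw [← ht, Nat.add_mul_mod_self_right]
    have hm' : (m + k) % k = j % k := by rw [Nat.add_mod_right]; exact hm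
    have ht' : m + k + (t + 1) * k = j := by rw [← ht]; ring
    rw [mem_chain hk ht (gamW k j w), mem_chain hk ht w, IH (m + k) ht']
    constructor
    · rintro ⟨h1, h2, h3⟩
      refine ⟨h1, h2, ?_⟩
      have he := eval_mem w hk hm' h2
      rw [he.1, he.2] at h3
      simp only [splits_pair w hk hm] at h3
      rw [Xor', _root_.xor_comm]
      exact h3
    · rintro ⟨h1, h2, h3⟩
      refine ⟨h1, h2, ?_⟩
      have he := eval_mem w hk hm' h2
      rw [he.1, he.2]
      simp only [splits_pair w hk hm]
      rw [Xor', _root_.xor_comm]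
      exact h3


theorem gamma_involution (k n j : ℕ) (hk : 2 ≤ k) (hj : j ≤ n)
    (w : ℕ → ℕ) (hw : ∀ i, 1 ≤ i → i ≤ n → 0 < w i) :
    (∀ m, MemGamma k (gamW k j w) j m ↔ MemGamma k w j m) ∧
      (∀ p, gamW k j (gamW k j w) p = w p) := by
  have part1 : ∀ m, MemGamma k (gamW k j w) j m ↔ MemGamma k w j m := by
    intro m
    by_cases hc : ∃ t, m + (t + 1) * k = j
    · obtain ⟨t, ht⟩ := hc
      exact key hk w t m ht
    · constructor <;> rintro ⟨h1, t, ht, -⟩ <;> exact absurd ⟨t, ht⟩ hc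
  refine ⟨part1, fun p => ?_⟩
  by_cases hp : MemGamma k w j p
  · have hm : p % k = j % k := mem_mod hp
    rw [gamW_apply, if_pos ((part1 p).mpr hp)]
    exact (eval_mem w hk hm hp).2
  · rw [gamW_apply, if_neg (fun h => hp ((part1 p).mp h))]
    by_cases hq : MemGamma k w j (p - 1)
    · rw [if_pos ((part1 (p - 1)).mpr hq)]
      have hm : (p - 1) % k = j % k := mem_mod hq
      rw [(eval_mem w hk hm hq).1]
      congr 1
      have := hq.1
      omega
    · rw [if_neg (fun h => hq ((part1 (p - 1)).mp h)), gamW_apply, if_neg hp, if_neg hq]
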